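/- Fix z₀ with |z₀| = 1 and ε_n → 0⁺ with n·ε_n → ∞. Define P_n(z) = −(1−ε_n) conj(z₀) (1 − (1−ε_n)ⁿ conj(z₀)ⁿ zⁿ)/(1 − (1−ε_n) conj(z₀) z). Then P_n is a polynomial of degree n−1, P_n(z) → 1/(z − z₀) pointwise for every z on the unit circle with z ≠ z₀, and |P_n(z)| ≤ 2/|z − z₀| for all z on the unit circle with z ≠ z₀ and all sufficiently large n. -/

import Mathlib

open Complex Filter Polynomial Finset

-- key norm inequality: for |u| = 1, (1-e)|1-u| ≤ |1 - (1-e)u|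
lemma key_ineq (e : ℝ) (he0 : 0 ≤ e) (he1 : e ≤ 1) (u : ℂ) (hu : ‖u‖ = 1) :
    (1 - e) * ‖1 - u‖ ≤ ‖1 - ((1 - e : ℝ) : ℂ) * u‖ := by
  have hn : u.re * u.re + u.im * u.im = 1 := by
    rw [← Complex.normSq_apply, ← Complex.sq_norm, hu]; norm_num
  have hre : u.re ≤ 1 := by
    calc u.re ≤ ‖u‖ := Complex.re_le_norm u
      _ = 1 := hu
  have ha : 0 ≤ (1 - e) * ‖1 - u‖ :=
    mul_nonneg (by linarith) (norm_nonneg _)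
  have hb : 0 ≤ ‖1 - ((1 - e : ℝ) : ℂ) * u‖ := norm_nonneg _
  have hsq : ((1 - e) * ‖1 - u‖) ^ 2 ≤
      (‖1 - ((1 - e : ℝ) : ℂ) * u‖) ^ 2 := by
    rw [mul_pow, Complex.sq_norm, Complex.sq_norm]
    simp only [Complex.normSq_apply, Complex.sub_re, Complex.sub_im, Complex.mul_re,
      Complex.mul_im, Complex.ofReal_re, Complex.ofReal_im, Complex.one_re, Complex.one_im]
    nlinarith [hn, hre, sq_nonneg e,
      mul_nonneg (mul_nonneg he0 (by linarith : (0:ℝ) ≤ 1 - e))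
        (by linarith : (0:ℝ) ≤ 1 - u.re)]
  calc (1 - e) * ‖1 - u‖ = Real.sqrt (((1 - e) * ‖1 - u‖) ^ 2) :=
        (Real.sqrt_sq ha).symm
    _ ≤ Real.sqrt ((‖1 - ((1 - e : ℝ) : ℂ) * u‖) ^ 2) := Real.sqrt_le_sqrt hsq
    _ = _ := Real.sqrt_sq hb

lemma pow_tendsto_zero (ε : ℕ → ℝ) (hε : ∀ n, 0 < ε n ∧ ε n < 1)
    (hnε : Tendsto (fun n : ℕ => (n : ℝ) * ε n) atTop atTop) :
    Tendsto (fun n : ℕ => (1 - ε n) ^ n) atTop (nhds 0) := by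
  have h0 : ∀ n : ℕ, (0:ℝ) ≤ (1 - ε n) ^ n :=
    fun n => pow_nonneg (by linarith [(hε n).2]) n
  have hb : ∀ n : ℕ, (1 - ε n) ^ n ≤ Real.exp (-((n : ℝ) * ε n)) := by
    intro n
    calc (1 - ε n) ^ n ≤ (Real.exp (-(ε n))) ^ n := by
          apply pow_le_pow_left₀ (by linarith [(hε n).2])
          linarith [Real.add_one_le_exp (-(ε n))]
      _ = Real.exp (-((n : ℝ) * ε n)) := by
          rw [← Real.exp_nat_mul]; ring_nf
  exact squeeze_zero h0 hb
    (Real.tendsto_exp_atBot.comp (tendsto_neg_atTop_atBot.comp hnε))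

theorem approximating_polynomials (z₀ : ℂ) (hz₀ : ‖z₀‖ = 1)
    (ε : ℕ → ℝ) (hε : ∀ n, 0 < ε n ∧ ε n < 1)
    (hε0 : Tendsto ε atTop (nhds 0))
    (hnε : Tendsto (fun n : ℕ => (n : ℝ) * ε n) atTop atTop) :
    (∀ n : ℕ, 1 ≤ n → ∃ Q : Polynomial ℂ, Q.degree = (n - 1 : ℕ) ∧
        ∀ z : ℂ, ‖z‖ = 1 →
          Q.eval z = -((1 - ε n : ℝ) : ℂ) * (starRingEnd ℂ) z₀ *
            (1 - (((1 - ε n : ℝ) : ℂ) * (starRingEnd ℂ) z₀ * z) ^ n) /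
              (1 - ((1 - ε n : ℝ) : ℂ) * (starRingEnd ℂ) z₀ * z)) ∧
    (∀ z : ℂ, ‖z‖ = 1 → z ≠ z₀ →
        Tendsto (fun n : ℕ =>
            -((1 - ε n : ℝ) : ℂ) * (starRingEnd ℂ) z₀ *
              (1 - (((1 - ε n : ℝ) : ℂ) * (starRingEnd ℂ) z₀ * z) ^ n) /
                (1 - ((1 - ε n : ℝ) : ℂ) * (starRingEnd ℂ) z₀ * z))
          atTop (nhds (1 / (z - z₀)))) ∧
    (∃ N : ℕ, ∀ n ≥ N, ∀ z : ℂ, ‖z‖ = 1 → z ≠ z₀ →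
        ‖(-((1 - ε n : ℝ) : ℂ) * (starRingEnd ℂ) z₀ *
              (1 - (((1 - ε n : ℝ) : ℂ) * (starRingEnd ℂ) z₀ * z) ^ n) /
                (1 - ((1 - ε n : ℝ) : ℂ) * (starRingEnd ℂ) z₀ * z))‖ ≤
          2 / ‖z - z₀‖) := by
  have habsc : ‖(starRingEnd ℂ) z₀‖ = 1 := by
    rw [Complex.norm_conj, hz₀]
  have hmc : (starRingEnd ℂ) z₀ * z₀ = 1 := by
    rw [mul_comm, Complex.mul_conj]
    norm_cast
    rw [← Complex.sq_norm, hz₀]; norm_num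
  have habsw : ∀ n : ℕ, ∀ z : ℂ, ‖z‖ = 1 →
      ‖((1 - ε n : ℝ) : ℂ) * (starRingEnd ℂ) z₀ * z‖ = 1 - ε n := by
    intro n z hz
    rw [norm_mul, norm_mul, habsc, hz, Complex.norm_real, Real.norm_eq_abs,
      abs_of_pos (by linarith [(hε n).2])]
    ring
  have hne1 : ∀ n : ℕ, ∀ z : ℂ, ‖z‖ = 1 →
      ((1 - ε n : ℝ) : ℂ) * (starRingEnd ℂ) z₀ * z ≠ 1 := by
    intro n z hz h
    have := habsw n z hz
    rw [h] at this
    simp at this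
    linarith [(hε n).1]
  refine ⟨?_, ?_, ?_⟩
  · -- polynomial
    intro n hn
    set w : ℂ := ((1 - ε n : ℝ) : ℂ) * (starRingEnd ℂ) z₀ with hw
    have hwne : w ≠ 0 := by
      intro h
      have : ‖w‖ = 1 - ε n := by
        rw [hw, norm_mul, habsc, Complex.norm_real, Real.norm_eq_abs, abs_of_pos (by linarith [(hε n).2])]
        ring
      rw [h] at this; simp at this; linarith [(hε n).1, (hε n).2]
    refine ⟨∑ i ∈ Finset.range n, Polynomial.C (-(w ^ (i + 1))) * Polynomial.X ^ i, ?_, ?_⟩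
    · apply Polynomial.degree_eq_of_le_of_coeff_ne_zero
      · refine (Polynomial.degree_sum_le _ _).trans ?_
        apply Finset.sup_le
        intro i hi
        refine (Polynomial.degree_C_mul_X_pow_le _ _).trans ?_
        exact_mod_cast Nat.cast_le.mpr (Nat.le_sub_one_of_lt (Finset.mem_range.mp hi))
      · rw [Polynomial.finset_sum_coeff]
        simp only [Polynomial.coeff_C_mul, Polynomial.coeff_X_pow]
        rw [Finset.sum_eq_single (n - 1)]
        · have hnn : n - 1 + 1 = n := Nat.sub_add_cancel hn
          simp [hnn, hwne]
        · intro i _ hine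
          simp [Ne.symm hine]
        · intro h
          exfalso; exact h (Finset.mem_range.mpr (Nat.sub_lt (by omega) one_pos))
    · intro z hz
      have hx1 : w * z ≠ 1 := hne1 n z hz
      have hd : 1 - w * z ≠ 0 := sub_ne_zero.mpr (Ne.symm hx1)
      rw [Polynomial.eval_finset_sum]
      simp only [Polynomial.eval_mul, Polynomial.eval_C, Polynomial.eval_pow,
        Polynomial.eval_X]
      have hsum : ∑ i ∈ Finset.range n, -(w ^ (i + 1)) * z ^ i
          = -w * ∑ i ∈ Finset.range n, (w * z) ^ i := by
        rw [Finset.mul_sum]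
        apply Finset.sum_congr rfl
        intro i _
        rw [mul_pow, pow_succ]; ring
      rw [hsum, geom_sum_eq hx1,
        show ((w * z) ^ n - 1) / (w * z - 1) = (1 - (w * z) ^ n) / (1 - w * z) by
          rw [div_eq_div_iff (sub_ne_zero.mpr hx1) hd]; ring]
      ring
  · -- convergence
    intro z hz hzz₀
    have hu1 : (starRingEnd ℂ) z₀ * z ≠ 1 := by
      intro h
      apply hzz₀
      have : z₀ * ((starRingEnd ℂ) z₀ * z) = z₀ * 1 := by rw [h]
      rw [← mul_assoc, mul_comm z₀, hmc, one_mul, mul_one] at this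
      exact this
    have hden : (1 : ℂ) - (starRingEnd ℂ) z₀ * z ≠ 0 := sub_ne_zero.mpr (Ne.symm hu1)
    have hc : Tendsto (fun n : ℕ => ((1 - ε n : ℝ) : ℂ)) atTop (nhds 1) := by
      have h1 : Tendsto (fun n : ℕ => (1 : ℝ) - ε n) atTop (nhds 1) := by
        simpa using tendsto_const_nhds.sub hε0
      have h2 := (Complex.continuous_ofReal.tendsto (1 : ℝ)).comp h1
      rw [show ((1 : ℝ) : ℂ) = 1 from Complex.ofReal_one] at h2
      exact h2
    have hpow : Tendsto (fun n : ℕ =>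
        (((1 - ε n : ℝ) : ℂ) * (starRingEnd ℂ) z₀ * z) ^ n) atTop (nhds 0) := by
      rw [tendsto_zero_iff_norm_tendsto_zero]
      have heq : ∀ n : ℕ, ‖(((1 - ε n : ℝ) : ℂ) * (starRingEnd ℂ) z₀ * z) ^ n‖
          = (1 - ε n) ^ n := by
        intro n
        rw [norm_pow, habsw n z hz]
      simp only [heq]
      exact pow_tendsto_zero ε hε hnε
    have hnum : Tendsto (fun n : ℕ =>
        -((1 - ε n : ℝ) : ℂ) * (starRingEnd ℂ) z₀ *
          (1 - (((1 - ε n : ℝ) : ℂ) * (starRingEnd ℂ) z₀ * z) ^ n)) atTop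
        (nhds (-1 * (starRingEnd ℂ) z₀ * (1 - 0))) :=
      ((hc.neg.mul_const _).mul (tendsto_const_nhds.sub hpow))
    have hdenl : Tendsto (fun n : ℕ =>
        1 - ((1 - ε n : ℝ) : ℂ) * (starRingEnd ℂ) z₀ * z) atTop
        (nhds (1 - 1 * (starRingEnd ℂ) z₀ * z)) :=
      tendsto_const_nhds.sub ((hc.mul_const _).mul_const _)
    have hlim := hnum.div hdenl (by simpa using hden)
    convert hlim using 2
    case e'_3 => rfl
    rw [eq_comm, div_eq_div_iff (by simpa using hden) (sub_ne_zero.mpr hzz₀)]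
    linear_combination hmc
  · -- bound
    refine ⟨0, fun n _ z hz hzz₀ => ?_⟩
    set u : ℂ := (starRingEnd ℂ) z₀ * z with hu
    have habsu : ‖u‖ = 1 := by rw [hu, norm_mul, habsc, hz]; ring
    have he0 := (hε n).1
    have he1 := (hε n).2
    have hzu : z - z₀ = z₀ * (u - 1) := by
      rw [hu, mul_sub, ← mul_assoc, mul_comm z₀, hmc, one_mul, mul_one]
    have h1u : ‖z - z₀‖ = ‖1 - u‖ := by
      rw [hzu, norm_mul, hz₀, one_mul, norm_sub_rev]
    have h1upos : 0 < ‖1 - u‖ := by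
      rw [← h1u]
      exact norm_pos_iff.mpr (sub_ne_zero.mpr hzz₀)
    have hkey : (1 - ε n) * ‖1 - u‖ ≤
        ‖1 - ((1 - ε n : ℝ) : ℂ) * (starRingEnd ℂ) z₀ * z‖ := by
      have := key_ineq (ε n) he0.le he1.le u habsu
      rwa [hu, ← mul_assoc] at this
    have hdpos : 0 < ‖1 - ((1 - ε n : ℝ) : ℂ) * (starRingEnd ℂ) z₀ * z‖ := by
      apply norm_pos_iff.mpr
      exact sub_ne_zero.mpr (Ne.symm (hne1 n z hz))
    have hnum2 : ‖1 - (((1 - ε n : ℝ) : ℂ) * (starRingEnd ℂ) z₀ * z) ^ n‖ ≤ 2 := by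
      calc ‖1 - (((1 - ε n : ℝ) : ℂ) * (starRingEnd ℂ) z₀ * z) ^ n‖
          ≤ ‖1‖ + ‖(((1 - ε n : ℝ) : ℂ) * (starRingEnd ℂ) z₀ * z) ^ n‖ :=
            norm_sub_le _ _
        _ ≤ 1 + 1 := by
            rw [norm_one, norm_pow, habsw n z hz]
            have : (1 - ε n) ^ n ≤ 1 := pow_le_one₀ (by linarith) (by linarith)
            linarith
        _ = 2 := by norm_num
    rw [norm_div, norm_mul, norm_mul, norm_neg, habsc, Complex.norm_real, Real.norm_eq_abs,
      abs_of_pos (by linarith), mul_one, h1u]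
    rw [div_le_div_iff₀ hdpos h1upos]
    nlinarith [norm_nonneg
      (1 - (((1 - ε n : ℝ) : ℂ) * (starRingEnd ℂ) z₀ * z) ^ n), h1upos.le, hkey, hnum2]
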